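/- (Moon–Moser) Let G be a simple graph on n ≥ 1 vertices with m edges. Then the number of triangles of G satisfies t(G) ≥ (4m/(3n))·(m − n²/4). -/

import Mathlib

open Classical in
/-- Adjacency matrix of a simple graph, over `ℝ`. -/
noncomputable def adjMat {V : Type*} [Fintype V] (G : SimpleGraph V) : Matrix V V ℝ :=
  Matrix.of fun i j => if G.Adj i j then 1 else 0

/-- Spectral radius (largest eigenvalue) of a finite simple graph: the supremum of the
real spectrum of its adjacency matrix. -/
noncomputable def specRad {V : Type*} [Fintype V] [DecidableEq V]
    (G : SimpleGraph V) : ℝ :=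
  sSup (spectrum ℝ (adjMat G))

/-- Number of edges of a graph. -/
noncomputable def edgeCount {V : Type*} (G : SimpleGraph V) : ℕ := G.edgeSet.ncard

/-- Number of triangles of a graph. -/
noncomputable def triangleCount {V : Type*} (G : SimpleGraph V) : ℕ :=
  {t : Finset V | G.IsNClique 3 t}.ncard

/-- Triangle covering number: minimum size of a vertex set meeting every triangle. -/
noncomputable def triangleCoverNumber {V : Type*} [Fintype V] [DecidableEq V]
    (G : SimpleGraph V) : ℕ :=
  sInf {k | ∃ s : Finset V, s.card = k ∧ ∀ t : Finset V, G.IsNClique 3 t → ∃ v ∈ s, v ∈ t}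

/-- Number of bowties: unordered pairs of triangles sharing exactly one vertex. -/
noncomputable def bowtieCount {V : Type*} [DecidableEq V] (G : SimpleGraph V) : ℕ :=
  {p : Finset (Finset V) | p.card = 2 ∧ (∀ t ∈ p, G.IsNClique 3 t) ∧
    ∀ t₁ ∈ p, ∀ t₂ ∈ p, t₁ ≠ t₂ → (t₁ ∩ t₂).card = 1}.ncard

/-- Complete bipartite graph on `Fin n` with parts `[0, s)` and `[s, n)`. -/
def biGraph (n s : ℕ) : SimpleGraph (Fin n) :=
  SimpleGraph.fromRel (fun i j => (i : ℕ) < s ∧ s ≤ (j : ℕ))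

/-- `K_{s,t}^{+2}`: complete bipartite with two disjoint extra edges `{0,1}`, `{2,3}`
inside the part `[0, s)`. -/
def biGraphPlus2 (n s : ℕ) : SimpleGraph (Fin n) :=
  SimpleGraph.fromRel (fun i j => ((i : ℕ) < s ∧ s ≤ (j : ℕ)) ∨
    ((i : ℕ) = 0 ∧ (j : ℕ) = 1) ∨ ((i : ℕ) = 2 ∧ (j : ℕ) = 3))

/-- `K_{s,t}^{+}`: complete bipartite with one extra edge `{0,1}` inside the part `[0, s)`. -/
def biGraphPlus1 (n s : ℕ) : SimpleGraph (Fin n) :=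
  SimpleGraph.fromRel (fun i j => ((i : ℕ) < s ∧ s ≤ (j : ℕ)) ∨ ((i : ℕ) = 0 ∧ (j : ℕ) = 1))

/-- `K_{s,t}^{++}`: complete bipartite with one extra edge in each part. -/
def biGraphPlusPlus (n s : ℕ) : SimpleGraph (Fin n) :=
  SimpleGraph.fromRel (fun i j => ((i : ℕ) < s ∧ s ≤ (j : ℕ)) ∨
    ((i : ℕ) = 0 ∧ (j : ℕ) = 1) ∨ ((i : ℕ) = s ∧ (j : ℕ) = s + 1))

/-- The friendship graph `F_k`: `k` triangles meeting in the common vertex `0`. -/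
def friendship (k : ℕ) : SimpleGraph (Fin (2 * k + 1)) :=
  SimpleGraph.fromRel (fun a b => ((a : ℕ) = 0 ∧ (b : ℕ) ≠ 0) ∨
    ((a : ℕ) % 2 = 1 ∧ (b : ℕ) = (a : ℕ) + 1))

/-- `G` contains a copy of `H` (a subgraph isomorphic to `H`). -/
def ContainsCopy {α β : Type*} (H : SimpleGraph α) (G : SimpleGraph β) : Prop :=
  ∃ f : α → β, Function.Injective f ∧ ∀ a b, H.Adj a b → G.Adj (f a) (f b)

/-- Number of edges of `G` with both endpoints in `S`. -/
noncomputable def eIn {V : Type*} (G : SimpleGraph V) (S : Finset V) : ℕ :=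
  {e ∈ G.edgeSet | ∀ v ∈ e, v ∈ S}.ncard

/-- Number of edges of `G` with one endpoint in `S` and the other in `T`. -/
noncomputable def eCross {V : Type*} (G : SimpleGraph V) (S T : Finset V) : ℕ :=
  {e ∈ G.edgeSet | ∃ u ∈ S, ∃ v ∈ T, e = s(u, v)}.ncard

/-- `G` is `ε`-far from being bipartite: every spanning subgraph obtained by removing
fewer than `ε` edges is non-bipartite. -/
def FarFromBipartite {V : Type*} (G : SimpleGraph V) (ε : ℝ) : Prop :=
  ∀ G' : SimpleGraph V, G' ≤ G → (edgeCount G : ℝ) - ε < (edgeCount G' : ℝ) →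
    ¬ G'.Colorable 2

section MoonMoserAux

open Finset

set_option linter.unusedSectionVars false

variable {V : Type*} [Fintype V] [DecidableEq V] (G : SimpleGraph V) [DecidableRel G.Adj]

lemma sum_adj_pairs (f : V → V → ℕ) :
    ∑ p ∈ univ.filter (fun p : V × V => G.Adj p.1 p.2), f p.1 p.2
      = ∑ u, ∑ v ∈ G.neighborFinset u, f u v := by
  rw [Finset.sum_filter, ← Finset.univ_product_univ, Finset.sum_product]
  simp [SimpleGraph.neighborFinset_eq_filter, Finset.sum_filter]

lemma pair_card :
    (univ.filter (fun p : V × V => G.Adj p.1 p.2)).card = 2 * G.edgeFinset.card := by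
  have h := sum_adj_pairs G (fun _ _ => 1)
  simp only [Finset.sum_const, smul_eq_mul, mul_one] at h
  rw [h, ← SimpleGraph.sum_degrees_eq_twice_card_edges]
  rfl

lemma triple_card :
    (univ.filter fun p : V × V × V =>
        G.Adj p.1 p.2.1 ∧ G.Adj p.1 p.2.2 ∧ G.Adj p.2.1 p.2.2).card
      = 6 * (G.cliqueFinset 3).card := by
  rw [Finset.card_eq_sum_card_fiberwise
      (f := fun p : V × V × V => ({p.1, p.2.1, p.2.2} : Finset V)) (t := G.cliqueFinset 3)
      (fun p hp => by
        simp only [mem_coe, mem_filter] at hp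
        exact SimpleGraph.mem_cliqueFinset_iff.2 (SimpleGraph.is3Clique_triple_iff.2 hp.2))]
  rw [Finset.sum_congr rfl (fun tc htc => ?_), Finset.sum_const, smul_eq_mul, mul_comm]
  -- fiber has card 6
  have hcl := SimpleGraph.mem_cliqueFinset_iff.1 htc
  obtain ⟨a, b, c, hab, hac, hbc, rfl⟩ := Finset.card_eq_three.1 hcl.card_eq
  obtain ⟨h1, h2, h3⟩ := SimpleGraph.is3Clique_triple_iff.1 hcl
  have key : (univ.filter fun p : V × V × V =>
      (G.Adj p.1 p.2.1 ∧ G.Adj p.1 p.2.2 ∧ G.Adj p.2.1 p.2.2) ∧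
        ({p.1, p.2.1, p.2.2} : Finset V) = {a, b, c})
      = ({(a,b,c),(a,c,b),(b,a,c),(b,c,a),(c,a,b),(c,b,a)} : Finset (V×V×V)) := by
    have h1' := h1.symm; have h2' := h2.symm; have h3' := h3.symm
    ext ⟨x, y, z⟩
    simp only [mem_filter, mem_univ, true_and, mem_insert, mem_singleton, Prod.mk.injEq]
    constructor
    · rintro ⟨⟨hxy, hxz, hyz⟩, hset⟩
      have hx : x ∈ ({a,b,c} : Finset V) := by rw [← hset]; simp
      have hy : y ∈ ({a,b,c} : Finset V) := by rw [← hset]; simp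
      have hz : z ∈ ({a,b,c} : Finset V) := by rw [← hset]; simp
      simp only [mem_insert, mem_singleton] at hx hy hz
      have e1 := hxy.ne; have e2 := hxz.ne; have e3 := hyz.ne
      clear hset hxy hxz hyz
      rcases hx with rfl | rfl | rfl <;> rcases hy with rfl | rfl | rfl <;>
        rcases hz with rfl | rfl | rfl <;>
        first
          | exact absurd rfl e1 | exact absurd rfl e2 | exact absurd rfl e3
          | exact Or.inl ⟨rfl, rfl, rfl⟩
          | exact Or.inr (Or.inl ⟨rfl, rfl, rfl⟩)
          | exact Or.inr (Or.inr (Or.inl ⟨rfl, rfl, rfl⟩))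
          | exact Or.inr (Or.inr (Or.inr (Or.inl ⟨rfl, rfl, rfl⟩)))
          | exact Or.inr (Or.inr (Or.inr (Or.inr (Or.inl ⟨rfl, rfl, rfl⟩))))
          | exact Or.inr (Or.inr (Or.inr (Or.inr (Or.inr ⟨rfl, rfl, rfl⟩))))
    · have s1 : ({a,c,b} : Finset V) = {a,b,c} := by ext w; simp; tauto
      have s2 : ({b,a,c} : Finset V) = {a,b,c} := by ext w; simp; tauto
      have s3 : ({b,c,a} : Finset V) = {a,b,c} := by ext w; simp; tauto
      have s4 : ({c,a,b} : Finset V) = {a,b,c} := by ext w; simp; tauto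
      have s5 : ({c,b,a} : Finset V) = {a,b,c} := by ext w; simp; tauto
      rintro (⟨rfl,rfl,rfl⟩|⟨rfl,rfl,rfl⟩|⟨rfl,rfl,rfl⟩|⟨rfl,rfl,rfl⟩|⟨rfl,rfl,rfl⟩|⟨rfl,rfl,rfl⟩)
      · exact ⟨⟨h1, h2, h3⟩, rfl⟩
      · exact ⟨⟨h2, h1, h3'⟩, s1⟩
      · exact ⟨⟨h1', h3, h2⟩, s2⟩
      · exact ⟨⟨h3, h1', h2'⟩, s3⟩
      · exact ⟨⟨h2', h3', h1⟩, s4⟩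
      · exact ⟨⟨h3', h2', h1'⟩, s5⟩
  rw [Finset.filter_filter, key]
  simp [Finset.card_insert_of_notMem, Prod.ext_iff, hab, hac, hbc, hab.symm, hac.symm, hbc.symm]

lemma triple_card_eq_sum :
    (univ.filter fun p : V × V × V =>
        G.Adj p.1 p.2.1 ∧ G.Adj p.1 p.2.2 ∧ G.Adj p.2.1 p.2.2).card
      = ∑ p ∈ univ.filter (fun p : V × V => G.Adj p.1 p.2),
          (G.neighborFinset p.1 ∩ G.neighborFinset p.2).card := by
  rw [sum_adj_pairs G (fun u v => (G.neighborFinset u ∩ G.neighborFinset v).card)]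
  rw [Finset.card_filter, ← Finset.univ_product_univ, Finset.sum_product]
  refine Finset.sum_congr rfl fun u _ => ?_
  rw [← Finset.univ_product_univ, Finset.sum_product,
    SimpleGraph.neighborFinset_eq_filter, Finset.sum_filter]
  refine Finset.sum_congr rfl fun v _ => ?_
  by_cases h : G.Adj u v
  · simp only [h, if_true, true_and]
    have : filter (fun w => G.Adj u w) univ ∩ G.neighborFinset v
        = univ.filter (fun w => G.Adj u w ∧ G.Adj v w) := by
      ext w; simp
    rw [this, Finset.card_filter]
  · simp [h]

lemma degree_sum_bound (u v : V) :
    G.degree u + G.degree v ≤ Fintype.card V +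
      (G.neighborFinset u ∩ G.neighborFinset v).card := by
  have := Finset.card_union_add_card_inter (G.neighborFinset u) (G.neighborFinset v)
  have hle : (G.neighborFinset u ∪ G.neighborFinset v).card ≤ Fintype.card V := by
    simpa using Finset.card_le_card (Finset.subset_univ _)
  simp only [SimpleGraph.degree] at *
  omega

lemma sum_deg_pairs :
    ∑ p ∈ univ.filter (fun p : V × V => G.Adj p.1 p.2), (G.degree p.1 + G.degree p.2)
      = 2 * ∑ v, G.degree v ^ 2 := by
  rw [sum_adj_pairs G (fun u v => G.degree u + G.degree v)]
  rw [two_mul]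
  have h1 : ∑ u, ∑ v ∈ G.neighborFinset u, (G.degree u + G.degree v)
      = ∑ u, ∑ v ∈ G.neighborFinset u, G.degree u
        + ∑ u, ∑ v ∈ G.neighborFinset u, G.degree v := by
    rw [← Finset.sum_add_distrib]
    exact Finset.sum_congr rfl fun u _ => Finset.sum_add_distrib
  rw [h1]
  congr 1
  · refine Finset.sum_congr rfl fun u _ => ?_
    rw [Finset.sum_const, smul_eq_mul, sq]
    rfl
  · -- swap the order of summation
    have : ∀ u, ∑ v ∈ G.neighborFinset u, G.degree v
        = ∑ v, if G.Adj u v then G.degree v else 0 := by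
      intro u; rw [SimpleGraph.neighborFinset_eq_filter, Finset.sum_filter]
    simp only [this]
    rw [Finset.sum_comm]
    refine Finset.sum_congr rfl fun v _ => ?_
    have hcomm : ∀ x, G.Adj x v ↔ G.Adj v x := fun x => G.adj_comm x v
    simp only [hcomm]
    rw [← Finset.sum_filter, ← SimpleGraph.neighborFinset_eq_filter,
      Finset.sum_const, smul_eq_mul, sq]
    rfl

end MoonMoserAux

open Finset in
/-- **Moon–Moser.** For a graph on `n ≥ 1` vertices with `m` edges,
`t(G) ≥ (4m/(3n))·(m − n²/4)`. -/
theorem stmt_9 (n : ℕ) (hn : 1 ≤ n) (G : SimpleGraph (Fin n)) :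
    4 * (edgeCount G : ℝ) / (3 * n) * ((edgeCount G : ℝ) - (n : ℝ) ^ 2 / 4) ≤
      (triangleCount G : ℝ) := by
  classical
  have hedge : edgeCount G = G.edgeFinset.card := by
    rw [edgeCount, ← SimpleGraph.coe_edgeFinset, Set.ncard_coe_finset]
  have htri : triangleCount G = (G.cliqueFinset 3).card := by
    rw [triangleCount]
    have h : {t : Finset (Fin n) | G.IsNClique 3 t} = ↑(G.cliqueFinset 3) := by
      ext s; simp [SimpleGraph.mem_cliqueFinset_iff]
    rw [h, Set.ncard_coe_finset]
  set m := G.edgeFinset.card with hm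
  set t := (G.cliqueFinset 3).card with ht
  set S := ∑ v, G.degree v ^ 2 with hS
  set P := univ.filter (fun p : Fin n × Fin n => G.Adj p.1 p.2) with hP
  have hA : ∑ p ∈ P, (G.degree p.1 + G.degree p.2) = 2 * S := sum_deg_pairs G
  have hB : P.card = 2 * m := pair_card G
  have hC : ∑ p ∈ P, (G.neighborFinset p.1 ∩ G.neighborFinset p.2).card = 6 * t :=
    (triple_card_eq_sum G).symm.trans (triple_card G)
  -- key combinatorial inequality
  have key1 : 2 * S ≤ n * (2 * m) + 6 * t := by
    calc 2 * S = ∑ p ∈ P, (G.degree p.1 + G.degree p.2) := hA.symm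
      _ ≤ ∑ p ∈ P, (Fintype.card (Fin n)
            + (G.neighborFinset p.1 ∩ G.neighborFinset p.2).card) :=
        Finset.sum_le_sum fun p _ => degree_sum_bound G p.1 p.2
      _ = P.card * Fintype.card (Fin n)
            + ∑ p ∈ P, (G.neighborFinset p.1 ∩ G.neighborFinset p.2).card := by
        rw [Finset.sum_add_distrib, Finset.sum_const, smul_eq_mul]
      _ = n * (2 * m) + 6 * t := by rw [hB, hC, Fintype.card_fin, mul_comm]
  -- Cauchy-Schwarz
  have key2 : ((2 * m : ℕ) : ℝ) ^ 2 ≤ (n : ℝ) * (S : ℝ) := by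
    have h := sq_sum_le_card_mul_sum_sq (s := (univ : Finset (Fin n)))
      (f := fun v => (G.degree v : ℝ))
    simp only [Finset.card_univ, Fintype.card_fin] at h
    have hs : ∑ v, ((G.degree v : ℝ)) = ((2 * m : ℕ) : ℝ) := by
      rw [hm, ← SimpleGraph.sum_degrees_eq_twice_card_edges]; push_cast; ring
    have hs2 : ∑ v, ((G.degree v : ℝ)) ^ 2 = (S : ℝ) := by
      rw [hS]; push_cast; ring
    rw [hs, hs2] at h
    exact h
  rw [hedge, htri]
  have hn0 : (0 : ℝ) < n := by exact_mod_cast hn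
  rw [div_mul_eq_mul_div, div_le_iff₀ (by positivity)]
  have key1' : (2 * S : ℝ) ≤ (n : ℝ) * (2 * m) + 6 * t := by exact_mod_cast key1
  have key1'' : (n : ℝ) * (2 * S) ≤ (n : ℝ) * ((n : ℝ) * (2 * m) + 6 * t) :=
    mul_le_mul_of_nonneg_left key1' hn0.le
  push_cast at key2
  nlinarith [key2, key1'']
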